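/- Let C ≥ 1 and let R, X ∈ ℝ^{C×C} with R symmetric positive definite; fix α ≥ 0 and set X̂ := X − αR. For each bus n, define the single-layer neural network functions γ_n(v, p_L, q_L) = Σ_{h=1}^{H} w_{p}^{(h)} tanh(a^{(h)} v + b^{(h)} p_L + c^{(h)} q_L + d^{(h)}) + e_p and ξ_n(v, p_L, q_L) = Σ_{h=1}^{H} w_{q}^{(h)} tanh(a^{(h)} v + b^{(h)} p_L + c^{(h)} q_L + d^{(h)}) + e_q. If a^{(h)} ≥ 0, w_p^{(h)} ≤ 0, and w_q^{(h)} ≤ 0 for all h ∈ {1,…,H}, and Σ_{h=1}^{H} |w_q^{(h)} a^{(h)}| ≤ 1/(κ(R^{1/2})·‖X̂‖), then for all inputs: (i) ∂γ_n/∂v ≤ 0 and ∂ξ_n/∂v ≤ 0, and (ii) |∂ξ_n/∂v| ≤ 1/(κ(R^{1/2})·‖X̂‖). -/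

import Mathlib

open Matrix

/-- The operator norm on real `C × C` matrices induced by the Euclidean (ℓ2) vector norm. -/
noncomputable def opNorm {C : ℕ} (A : Matrix (Fin C) (Fin C) ℝ) : ℝ :=
  ‖(Matrix.toEuclideanCLM (𝕜 := ℝ) A : EuclideanSpace ℝ (Fin C) →L[ℝ] EuclideanSpace ℝ (Fin C))‖

/-- Condition number `κ(A) = ‖A‖ ‖A⁻¹‖`. -/
noncomputable def condNumber {C : ℕ} (A : Matrix (Fin C) (Fin C) ℝ) : ℝ :=
  opNorm A * opNorm A⁻¹

lemma tanh_hasDerivAt (x : ℝ) : HasDerivAt Real.tanh (1 / Real.cosh x ^ 2) x := by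
  have h := (Real.hasDerivAt_sinh x).div (Real.hasDerivAt_cosh x) (by positivity)
  have : (Real.sinh / Real.cosh) = Real.tanh := by
    funext y; rw [Pi.div_apply, Real.tanh_eq_sinh_div_cosh]
  rw [this] at h
  rw [show Real.cosh x * Real.cosh x - Real.sinh x * Real.sinh x = 1 by
    nlinarith [Real.cosh_sq_sub_sinh_sq x]] at h
  exact h

lemma nn_deriv {H : ℕ} (w a b c d : Fin H → ℝ) (e pL qL v : ℝ) :
    deriv (fun u => ∑ h, w h * Real.tanh (a h * u + b h * pL + c h * qL + d h) + e) v
      = ∑ h, w h * (a h * (1 / Real.cosh (a h * v + b h * pL + c h * qL + d h) ^ 2)) := by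
  have H1 : ∀ h : Fin H, HasDerivAt
      (fun u => w h * Real.tanh (a h * u + b h * pL + c h * qL + d h))
      (w h * (a h * (1 / Real.cosh (a h * v + b h * pL + c h * qL + d h) ^ 2))) v := by
    intro h
    have hlin : HasDerivAt (fun u => a h * u + b h * pL + c h * qL + d h) (a h) v := by
      simpa using (((hasDerivAt_id v).const_mul (a h)).add_const
        (b h * pL)).add_const (c h * qL) |>.add_const (d h)
    have := (tanh_hasDerivAt (a h * v + b h * pL + c h * qL + d h)).comp v hlin
    simpa [mul_comm, mul_assoc, mul_left_comm] using this.const_mul (w h)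
  have h2 : HasDerivAt
      (fun u => ∑ h, w h * Real.tanh (a h * u + b h * pL + c h * qL + d h) + e)
      (∑ h, w h * (a h * (1 / Real.cosh (a h * v + b h * pL + c h * qL + d h) ^ 2))) v :=
    (HasDerivAt.fun_sum (fun h _ => H1 h)).add_const e
  exact h2.deriv

/-- Conditions on single-layer neural network parameters ensuring the monotonicity
requirement and the slope bound on the learned equilibrium functions. -/
theorem nn_parameter_conditions
    {C H : ℕ} (hC : 1 ≤ C)
    (R X : Matrix (Fin C) (Fin C) ℝ) (hR : R.PosDef)
    (Rhalf : Matrix (Fin C) (Fin C) ℝ) (hRhalfPD : Rhalf.PosDef)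
    (hRhalfSq : Rhalf * Rhalf = R)
    (α : ℝ) (hα : 0 ≤ α)
    (wp wq a b c d : Fin H → ℝ) (ep eq' : ℝ)
    (ha : ∀ h, 0 ≤ a h) (hwp : ∀ h, wp h ≤ 0) (hwq : ∀ h, wq h ≤ 0)
    (hsum : ∑ h, |wq h * a h| ≤ 1 / (condNumber Rhalf * opNorm (X - α • R))) :
    ∀ v pL qL : ℝ,
      deriv (fun u => ∑ h, wp h * Real.tanh (a h * u + b h * pL + c h * qL + d h) + ep) v
        ≤ 0 ∧
      deriv (fun u => ∑ h, wq h * Real.tanh (a h * u + b h * pL + c h * qL + d h) + eq') v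
        ≤ 0 ∧
      |deriv (fun u => ∑ h, wq h * Real.tanh (a h * u + b h * pL + c h * qL + d h) + eq') v|
        ≤ 1 / (condNumber Rhalf * opNorm (X - α • R)) := by
  intro v pL qL
  have hs : ∀ h : Fin H, 0 < (1 / Real.cosh (a h * v + b h * pL + c h * qL + d h) ^ 2) ∧
      (1 / Real.cosh (a h * v + b h * pL + c h * qL + d h) ^ 2) ≤ 1 := by
    intro h
    have h1 := Real.one_le_cosh (a h * v + b h * pL + c h * qL + d h)
    constructor
    · positivity
    · rw [div_le_one (by positivity)]; nlinarith
  have key : ∀ (w : Fin H → ℝ), (∀ h, w h ≤ 0) →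
      deriv (fun u => ∑ h, w h * Real.tanh (a h * u + b h * pL + c h * qL + d h) + ep) v ≤ 0 :=
    by
    intro w hw
    rw [nn_deriv]
    apply Finset.sum_nonpos
    intro h _
    exact mul_nonpos_of_nonpos_of_nonneg (hw h)
      (mul_nonneg (ha h) (le_of_lt (hs h).1))
  have keyp := key wp hwp
  have keyq : deriv (fun u => ∑ h, wq h * Real.tanh (a h * u + b h * pL + c h * qL + d h) + eq') v
      ≤ 0 := by
    rw [nn_deriv]
    apply Finset.sum_nonpos
    intro h _
    exact mul_nonpos_of_nonpos_of_nonneg (hwq h)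
      (mul_nonneg (ha h) (le_of_lt (hs h).1))
  refine ⟨keyp, keyq, ?_⟩
  rw [abs_of_nonpos keyq]
  calc -(deriv (fun u => ∑ h, wq h * Real.tanh (a h * u + b h * pL + c h * qL + d h) + eq') v)
      ≤ ∑ h, |wq h * a h| := by
        rw [nn_deriv, ← Finset.sum_neg_distrib]
        apply Finset.sum_le_sum
        intro h _
        have h1 := (hs h).1
        have h2 := (hs h).2
        have h3 := ha h
        have h4 := hwq h
        have : |wq h * a h| = -(wq h * a h) := abs_of_nonpos (mul_nonpos_of_nonpos_of_nonneg h4 h3)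
        rw [this]
        have h5 := mul_le_of_le_one_right (mul_nonneg (neg_nonneg.2 h4) h3) h2
        nlinarith [h5]
    _ ≤ 1 / (condNumber Rhalf * opNorm (X - α • R)) := hsum
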